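/- Let n ≥ 1 and let φ : ℤ^n → ℤ/(2n+1) be the homomorphism determined by φ(e_i) = i (mod 2n+1) for i = 1, ..., n. If x, y ∈ ℤ^n satisfy |x - y|_M ≤ 1 and φ(x) = φ(y), then x = y; moreover, for every x ∈ ℤ^n there exists y with |x - y|_M ≤ 1 and φ(y) = 0. Consequently ker φ is a perfect Lee code of radius 1 in ℤ^n. -/

import Mathlib

/-- `T ⊆ ℤ^n` is a perfect Lee code of radius 1. -/
def PerfectLeeCode (n : ℕ) (T : Set (Fin n → ℤ)) : Prop :=
  ∀ x : Fin n → ℤ, ∃! t, t ∈ T ∧ ∑ i, |x i - t i| ≤ 1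

private def ψ (n : ℕ) (x : Fin n → ℤ) : ZMod (2 * n + 1) :=
  ∑ i, (x i : ZMod (2 * n + 1)) * ((((i : ℕ) + 1 : ℕ)) : ZMod (2 * n + 1))

private lemma psi_sub (n : ℕ) (x y : Fin n → ℤ) : ψ n x - ψ n y = ψ n (x - y) := by
  simp [ψ, ← Finset.sum_sub_distrib, sub_mul]

private lemma castNeZeroAux (n : ℕ) (a : ℕ) (h1 : 1 ≤ a) (h2 : a ≤ 2 * n) :
    (a : ZMod (2 * n + 1)) ≠ 0 := by
  intro h
  rw [ZMod.natCast_eq_zero_iff] at h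
  have := Nat.le_of_dvd (by omega) h
  omega

private lemma castInjAux (n : ℕ) (a b : ℕ) (h2 : a ≤ 2 * n) (h4 : b ≤ 2 * n)
    (h : (a : ZMod (2 * n + 1)) = b) : a = b := by
  rw [ZMod.natCast_eq_natCast_iff] at h
  have h5 : a % (2 * n + 1) = b % (2 * n + 1) := h
  rw [Nat.mod_eq_of_lt (by omega), Nat.mod_eq_of_lt (by omega)] at h5
  exact h5

private lemma classify (n : ℕ) (d : Fin n → ℤ) (h : ∑ i, |d i| ≤ 1) :
    d = 0 ∨ ∃ j, (d j = 1 ∨ d j = -1) ∧ ∀ i, i ≠ j → d i = 0 := by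
  by_cases h0 : ∀ i, d i = 0
  · left; funext i; exact h0 i
  · right
    push_neg at h0
    obtain ⟨j, hj⟩ := h0
    refine ⟨j, ?_, ?_⟩
    · have h1 : |d j| ≤ 1 :=
        le_trans (Finset.single_le_sum (fun i _ => abs_nonneg (d i)) (Finset.mem_univ j)) h
      have h2 : 1 ≤ |d j| := by
        have := abs_pos.mpr hj; omega
      rcases abs_le.mp h1 with ⟨hl, hr⟩
      rcases abs_cases (d j) with ⟨he, _⟩ | ⟨he, _⟩ <;> omega
    · intro i hi
      have hij : |d i| + |d j| ≤ ∑ k, |d k| := by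
        have heq := Finset.add_sum_erase Finset.univ (fun k => |d k|) (Finset.mem_univ i)
        have hj' : j ∈ Finset.univ.erase i :=
          Finset.mem_erase.mpr ⟨fun hh => hi hh.symm, Finset.mem_univ j⟩
        have hle := Finset.single_le_sum (f := fun k => |d k|) (fun k _ => abs_nonneg (d k))
          hj'
        calc |d i| + |d j| ≤ |d i| + ∑ k ∈ Finset.univ.erase i, |d k| := by
              exact add_le_add_right hle _
        _ = ∑ k, |d k| := heq
      have h1 : 1 ≤ |d j| := by
        have := abs_pos.mpr hj; omega
      have h2 : |d i| = 0 := by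
        have := abs_nonneg (d i); omega
      exact abs_eq_zero.mp h2

private lemma psi_single (n : ℕ) (d : Fin n → ℤ) (j : Fin n)
    (h0 : ∀ i, i ≠ j → d i = 0) :
    ψ n d = (d j : ZMod (2 * n + 1)) * ((((j : ℕ) + 1 : ℕ)) : ZMod (2 * n + 1)) := by
  rw [ψ, Finset.sum_eq_single j]
  · intro i _ hi; simp [h0 i hi]
  · intro h; exact absurd (Finset.mem_univ j) h

private lemma psi_inj (n : ℕ) (d e : Fin n → ℤ) (hd : ∑ i, |d i| ≤ 1)
    (he : ∑ i, |e i| ≤ 1) (h : ψ n d = ψ n e) : d = e := by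
  have hz : ψ n (0 : Fin n → ℤ) = 0 := by simp [ψ]
  have hne : ∀ (f : Fin n → ℤ) (j : Fin n), (f j = 1 ∨ f j = -1) →
      (∀ i, i ≠ j → f i = 0) → ψ n f ≠ 0 := by
    intro f j hs h0 hcon
    rw [psi_single n f j h0] at hcon
    have hjz : ((((j : ℕ) + 1 : ℕ)) : ZMod (2 * n + 1)) ≠ 0 :=
      castNeZeroAux n _ (by omega) (by have := j.2; omega)
    apply hjz
    rcases hs with hs | hs <;> rw [hs] at hcon
    · linear_combination hcon
    · linear_combination -hcon
  rcases classify n d hd with hd0 | ⟨j, hs, h0⟩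
  · rcases classify n e he with he0 | ⟨j', hs', h0'⟩
    · rw [hd0, he0]
    · exact absurd (by rw [← h, hd0, hz]) (hne e j' hs' h0')
  · rcases classify n e he with he0 | ⟨j', hs', h0'⟩
    · exact absurd (by rw [h, he0, hz]) (hne d j hs h0)
    · rw [psi_single n d j h0, psi_single n e j' h0'] at h
      have hj2 := j.2
      have hj'2 := j'.2
      have sumne : ((((j : ℕ) + 1) + ((j' : ℕ) + 1) : ℕ) : ZMod (2 * n + 1)) ≠ 0 :=
        castNeZeroAux n _ (by omega) (by omega)
      have main : j = j' ∧ d j = e j' := by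
        rcases hs with hs | hs <;> rcases hs' with hs' | hs' <;> rw [hs, hs'] at h
        · refine ⟨Fin.ext ?_, by rw [hs, hs']⟩
          push_cast at h
          have h2 : ((((j : ℕ) + 1 : ℕ)) : ZMod (2 * n + 1)) =
              ((((j' : ℕ) + 1 : ℕ)) : ZMod (2 * n + 1)) := by
            push_cast
            linear_combination h
          have := castInjAux n _ _ (by omega) (by omega) h2
          omega
        · exfalso; apply sumne; push_cast at h ⊢; linear_combination h
        · exfalso; apply sumne; push_cast at h ⊢; linear_combination -h
        · refine ⟨Fin.ext ?_, by rw [hs, hs']⟩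
          have h2 : ((((j : ℕ) + 1 : ℕ)) : ZMod (2 * n + 1)) =
              ((((j' : ℕ) + 1 : ℕ)) : ZMod (2 * n + 1)) := by
            push_cast at h ⊢
            linear_combination -h
          have := castInjAux n _ _ (by omega) (by omega) h2
          omega
      obtain ⟨hjj, hv⟩ := main
      subst hjj
      funext i
      by_cases hi : i = j
      · subst hi; exact hv
      · rw [h0 i hi, h0' i hi]

private lemma psi_update (n : ℕ) (x : Fin n → ℤ) (j : Fin n) (s : ℤ) :
    ψ n (Function.update x j (x j + s)) =
      ψ n x + (s : ZMod (2 * n + 1)) * ((((j : ℕ) + 1 : ℕ)) : ZMod (2 * n + 1)) := by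
  have hsub := psi_sub n (Function.update x j (x j + s)) x
  have hd : ∀ i, i ≠ j → (Function.update x j (x j + s) - x) i = 0 := by
    intro i hi
    simp [Function.update_of_ne hi]
  have hs := psi_single n (Function.update x j (x j + s) - x) j hd
  have hjv : (Function.update x j (x j + s) - x) j = s := by simp
  rw [hjv] at hs
  rw [hs] at hsub
  linear_combination hsub

private lemma sum_abs_update (n : ℕ) (x : Fin n → ℤ) (j : Fin n) (s : ℤ) :
    ∑ i, |x i - Function.update x j (x j + s) i| = |s| := by
  rw [Finset.sum_eq_single j]
  · simp
  · intro i _ hi; simp [Function.update_of_ne hi]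
  · intro h; exact absurd (Finset.mem_univ j) h

private lemma psi_exists (n : ℕ) (x : Fin n → ℤ) :
    ∃ y, ∑ i, |x i - y i| ≤ 1 ∧ ψ n y = 0 := by
  haveI : NeZero (2 * n + 1) := ⟨by omega⟩
  set c := ψ n x with hc
  set v := c.val with hv
  have hvlt : v < 2 * n + 1 := ZMod.val_lt c
  have hcv : ((v : ℕ) : ZMod (2 * n + 1)) = c := by
    rw [hv, ZMod.natCast_val, ZMod.cast_id]
  rcases Nat.lt_or_ge v 1 with h | h
  · refine ⟨x, by simp, ?_⟩
    have hv0 : v = 0 := by omega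
    rw [← hc, ← hcv, hv0, Nat.cast_zero]
  rcases le_or_gt v n with h2 | h2
  · refine ⟨Function.update x ⟨v - 1, by omega⟩ (x ⟨v - 1, by omega⟩ + (-1)), ?_, ?_⟩
    · rw [sum_abs_update]; norm_num
    · rw [psi_update, ← hc]
      have hj : ((⟨v - 1, by omega⟩ : Fin n) : ℕ) = v - 1 := rfl
      rw [hj]
      have hvv : ((v - 1 + 1 : ℕ) : ZMod (2 * n + 1)) = c := by
        rw [Nat.sub_add_cancel h]; exact hcv
      rw [hvv]; push_cast; ring
  · refine ⟨Function.update x ⟨2 * n - v, by omega⟩ (x ⟨2 * n - v, by omega⟩ + 1), ?_, ?_⟩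
    · rw [sum_abs_update]; norm_num
    · rw [psi_update, ← hc]
      have hj : ((⟨2 * n - v, by omega⟩ : Fin n) : ℕ) = 2 * n - v := rfl
      rw [hj]
      have hvv : ((v + (2 * n - v + 1) : ℕ) : ZMod (2 * n + 1)) = 0 := by
        have he : v + (2 * n - v + 1) = 2 * n + 1 := by omega
        rw [he]; exact ZMod.natCast_self _
      push_cast at hvv ⊢
      rw [← hcv]
      push_cast
      linear_combination hvv


/-- For the homomorphism `φ : ℤ^n → ℤ/(2n+1)` with `φ(e_i) = i` (1-based),
words at Manhattan distance ≤ 1 with equal `φ`-values coincide, every word is at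
distance ≤ 1 from `ker φ`, and hence `ker φ` is a perfect Lee code of radius 1. -/
theorem molnar_code (n : ℕ) (hn : 1 ≤ n) :
    let φ : (Fin n → ℤ) → ZMod (2 * n + 1) :=
      fun x => ∑ i, (x i : ZMod (2 * n + 1)) * ((((i : ℕ) + 1 : ℕ)) : ZMod (2 * n + 1))
    (∀ x y : Fin n → ℤ, ∑ i, |x i - y i| ≤ 1 → φ x = φ y → x = y) ∧
    (∀ x : Fin n → ℤ, ∃ y : Fin n → ℤ, ∑ i, |x i - y i| ≤ 1 ∧ φ y = 0) ∧
    PerfectLeeCode n {x | φ x = 0} := by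
  intro φ
  have hφ : ∀ x, φ x = ψ n x := fun x => rfl
  have key : ∀ x y : Fin n → ℤ, ∑ i, |x i - y i| ≤ 1 → ψ n x = ψ n y → x = y := by
    intro x y hxy hphi
    have hsum : ∑ i, |(x - y) i| ≤ 1 := by simpa using hxy
    have hz : ∑ i, |(0 : Fin n → ℤ) i| ≤ 1 := by simp
    have hpsi : ψ n (x - y) = ψ n (0 : Fin n → ℤ) := by
      rw [← psi_sub, hphi, sub_self]
      simp [ψ]
    have := psi_inj n (x - y) 0 hsum hz hpsi
    funext i
    have := congrFun this i
    simp only [Pi.sub_apply, Pi.zero_apply, sub_eq_zero] at this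
    exact this
  refine ⟨?_, ?_, ?_⟩
  · intro x y hxy hphi
    exact key x y hxy (by rw [← hφ, ← hφ]; exact hphi)
  · intro x
    obtain ⟨y, hy1, hy2⟩ := psi_exists n x
    exact ⟨y, hy1, by rw [hφ]; exact hy2⟩
  · intro x
    obtain ⟨y, hy1, hy2⟩ := psi_exists n x
    refine ⟨y, ⟨by rw [Set.mem_setOf_eq, hφ]; exact hy2, hy1⟩, ?_⟩
    rintro t ⟨ht0, ht1⟩
    rw [Set.mem_setOf_eq, hφ] at ht0
    have h1 : ψ n (x - t) = ψ n (x - y) := by rw [← psi_sub, ← psi_sub, ht0, hy2]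
    have hw1 : ∑ i, |(x - t) i| ≤ 1 := by simpa using ht1
    have hw2 : ∑ i, |(x - y) i| ≤ 1 := by simpa using hy1
    have heq := psi_inj n (x - t) (x - y) hw1 hw2 h1
    funext i
    have := congrFun heq i
    simp only [Pi.sub_apply, sub_right_inj] at this
    exact this
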